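/- For any integer $n \geq 1$ and any integer $i$ with $0 \leq i \leq n$, the power $2^{n-i}$ divides the binomial coefficient $\binom{2^n}{i+1}$. -/

import Mathlib

/-- For any integer `n ≥ 1` and `0 ≤ i ≤ n`, `2^(n-i)` divides `C(2^n, i+1)`. -/
theorem stmt_6 : ∀ n i : ℕ, 1 ≤ n → i ≤ n → 2 ^ (n - i) ∣ Nat.choose (2 ^ n) (i + 1) := by
  intro n i hn hi
  -- key identity: (i+1) * C(2^n, i+1) = 2^n * C(2^n - 1, i)
  have hkey : (i + 1) * Nat.choose (2 ^ n) (i + 1) = 2 ^ n * Nat.choose (2 ^ n - 1) i := by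
    have h := Nat.add_one_mul_choose_eq (2 ^ n - 1) i
    have h2 : 2 ^ n - 1 + 1 = 2 ^ n := Nat.succ_pred_eq_of_pos (Nat.pow_pos (by norm_num))
    rw [h2] at h
    linarith [h]
  have hdvd : 2 ^ n ∣ (i + 1) * Nat.choose (2 ^ n) (i + 1) := hkey ▸ Dvd.intro _ rfl
  set a := (i + 1).factorization 2 with ha
  have hip : i + 1 ≠ 0 := by omega
  have hsplit : 2 ^ a * ((i + 1) / 2 ^ a) = i + 1 := Nat.ordProj_mul_ordCompl_eq_self (i+1) 2
  have hcop : Nat.Coprime 2 ((i + 1) / 2 ^ a) := Nat.coprime_ordCompl Nat.prime_two hip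
  have hcop' : Nat.Coprime (2 ^ n) ((i + 1) / 2 ^ a) := Nat.Coprime.pow_left n hcop
  have hdvd2 : 2 ^ n ∣ 2 ^ a * Nat.choose (2 ^ n) (i + 1) := by
    have : 2 ^ n ∣ ((i + 1) / 2 ^ a) * (2 ^ a * Nat.choose (2 ^ n) (i + 1)) := by
      rw [← mul_assoc, mul_comm ((i+1)/2^a) (2^a), hsplit]; exact hdvd
    exact (Nat.Coprime.dvd_of_dvd_mul_left hcop' this)
  have hai : a ≤ i := by
    have h1 : 2 ^ a ∣ i + 1 := Nat.ordProj_dvd _ _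
    have h2 : 2 ^ a ≤ i + 1 := Nat.le_of_dvd (by omega) h1
    have h3 : a < 2 ^ a := Nat.lt_two_pow_self
    omega
  have h4 : 2 ^ (n - a) ∣ Nat.choose (2 ^ n) (i + 1) := by
    have := (Nat.pow_dvd_pow_iff_le_right (by norm_num : 1 < 2)).mpr (Nat.le_refl n)
    have hh : 2 ^ (n - a) * 2 ^ a ∣ 2 ^ a * Nat.choose (2 ^ n) (i + 1) := by
      rw [← pow_add]
      have : n - a + a = n := Nat.sub_add_cancel (hai.trans hi)
      rw [this]; exact hdvd2
    have hpos : 0 < 2 ^ a := Nat.pow_pos (by norm_num)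
    rw [mul_comm (2 ^ (n-a)) (2^a)] at hh
    exact (Nat.mul_dvd_mul_iff_left hpos).mp hh
  exact dvd_trans (pow_dvd_pow 2 (by omega)) h4
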